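/- Let m ≥ 1, let G be an abelian group, and let W : ℝ^m × ℝ^m → G be additive in each variable (W(λ+λ',μ) = W(λ,μ) + W(λ',μ) and W(λ,μ+μ') = W(λ,μ) + W(λ,μ')) and skew-symmetric (W(λ,μ) = −W(μ,λ)). Let λ^1,…,λ^n, μ^1,…,μ^n ∈ ℝ^m be such that the m×m matrix Σ_{j=1}^n (λ^j_p μ^j_q)_{p,q} is symmetric. Then there exist N ∈ ℕ, γ_1,…,γ_N ∈ ℝ and ν^1,…,ν^N ∈ ℝ^m such that Σ_{j=1}^n W(λ^j, μ^j) = Σ_{k=1}^N W(γ_k ν^k, ν^k). -/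

import Mathlib

/-- Let `m ≥ 1`, `G` an abelian group, and `W : ℝ^m × ℝ^m → G` additive
in each variable and skew-symmetric. If `λ^1, …, λ^n, μ^1, …, μ^n ∈ ℝ^m` are such that
the matrix `∑_j (λ^j_p μ^j_q)_{p,q}` is symmetric, then
`∑_j W(λ^j, μ^j) = ∑_k W(γ_k ν^k, ν^k)` for some `γ_1, …, γ_N ∈ ℝ` and
`ν^1, …, ν^N ∈ ℝ^m`. -/
theorem sum_W_eq_sum_W_proportional_of_symm {m : ℕ} (hm : 1 ≤ m)
    {G : Type*} [AddCommGroup G]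
    (W : (Fin m → ℝ) → (Fin m → ℝ) → G)
    (hadd₁ : ∀ a a' b, W (a + a') b = W a b + W a' b)
    (hadd₂ : ∀ a b b', W a (b + b') = W a b + W a b')
    (hskew : ∀ a b, W a b = -W b a)
    (n : ℕ) (L M : Fin n → Fin m → ℝ)
    (hsymm : ∀ p q : Fin m, ∑ j, L j p * M j q = ∑ j, L j q * M j p) :
    ∃ (N : ℕ) (γ : Fin N → ℝ) (ν : Fin N → Fin m → ℝ),
      ∑ j, W (L j) (M j) = ∑ k, W (γ k • ν k) (ν k) := by
  classical
  -- basic facts about W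
  have hW0 : ∀ b, W 0 b = 0 := by
    intro b
    have h := hadd₁ 0 0 b
    rw [add_zero] at h
    exact left_eq_add.mp h
  have hW0' : ∀ a, W a 0 = 0 := by
    intro a
    rw [hskew, hW0, neg_zero]
  -- the set of "allowed" terms and the subgroup it generates
  set S : Set G := {g : G | ∃ (c : ℝ) (v : Fin m → ℝ), g = W (c • v) v} with hS
  set H : AddSubgroup G := AddSubgroup.closure S with hH
  -- S is closed under negation
  have negS : ∀ g ∈ S, -g ∈ S := by
    rintro g ⟨c, v, rfl⟩
    by_cases hc : c = 0
    · refine ⟨0, 0, ?_⟩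
      rw [hc, zero_smul, hW0, neg_zero, zero_smul, hW0]
    · refine ⟨c⁻¹, c • v, ?_⟩
      rw [smul_smul, inv_mul_cancel₀ hc, one_smul]
      rw [hskew v (c • v)]
  -- Step 1: the sum lies in H
  have hmem : (∑ j, W (L j) (M j)) ∈ H := by
    set φ : G →+ G ⧸ H := QuotientAddGroup.mk' H with hφ
    set w : (Fin m → ℝ) → (Fin m → ℝ) → G ⧸ H := fun a b => φ (W a b) with hw
    have wadd₁ : ∀ a a' b, w (a + a') b = w a b + w a' b := by
      intro a a' b; show φ _ = φ _ + φ _; rw [hadd₁, map_add]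
    have wadd₂ : ∀ a b b', w a (b + b') = w a b + w a b' := by
      intro a b b'; show φ _ = φ _ + φ _; rw [hadd₂, map_add]
    have wskew : ∀ a b, w a b = -w b a := by
      intro a b; show φ _ = -φ _; rw [hskew, map_neg]
    have wdiag : ∀ (c : ℝ) (v : Fin m → ℝ), w (c • v) v = 0 := by
      intro c v
      exact (QuotientAddGroup.eq_zero_iff _).2
        (AddSubgroup.subset_closure ⟨c, v, rfl⟩)
    have wdiag' : ∀ (c : ℝ) (v : Fin m → ℝ), w v (c • v) = 0 := by
      intro c v; rw [wskew, wdiag, neg_zero]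
    have wz₁ : ∀ b, w 0 b = 0 := by
      intro b; show φ _ = 0; rw [hW0, map_zero]
    have wz₂ : ∀ a, w a 0 = 0 := by
      intro a; show φ _ = 0; rw [hW0', map_zero]
    -- summing lemmas
    have wsum₁ : ∀ {α : Type} (s : Finset α) (f : α → (Fin m → ℝ)) (b : Fin m → ℝ),
        w (∑ i ∈ s, f i) b = ∑ i ∈ s, w (f i) b := by
      intro α s f b
      exact map_sum (AddMonoidHom.mk' (fun a => w a b) (fun x y => wadd₁ x y b)) f s
    have wsum₂ : ∀ {α : Type} (s : Finset α) (a : Fin m → ℝ) (f : α → (Fin m → ℝ)),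
        w a (∑ i ∈ s, f i) = ∑ i ∈ s, w a (f i) := by
      intro α s a f
      exact map_sum (AddMonoidHom.mk' (fun b => w a b) (fun x y => wadd₂ a x y)) f s
    -- scalar can be moved across
    have wscal : ∀ (r : ℝ) (a b : Fin m → ℝ), w (r • a) b = w a (r • b) := by
      intro r a b
      by_cases hr : r = 0
      · rw [hr, zero_smul, zero_smul, wz₁, wz₂]
      · have key : ∀ b' : Fin m → ℝ, w (r • a) (r⁻¹ • b') = w a b' := by
          intro b'
          have h0 : w (r • a + b') (a + r⁻¹ • b') = 0 := by
            have he : a + r⁻¹ • b' = r⁻¹ • (r • a + b') := by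
              rw [smul_add, smul_smul, inv_mul_cancel₀ hr, one_smul]
            rw [he, wdiag']
          rw [wadd₁, wadd₂, wadd₂, wdiag, wdiag' r⁻¹ b', zero_add, add_zero,
            wskew b' a] at h0
          exact add_neg_eq_zero.mp h0
        have hk := key (r • b)
        rwa [smul_smul, inv_mul_cancel₀ hr, one_smul] at hk
    -- standard basis
    set e : Fin m → Fin m → ℝ := fun p j => if p = j then 1 else 0 with he
    have hbasis : ∀ x : Fin m → ℝ, x = ∑ p, x p • e p := fun x => pi_eq_sum_univ x
    -- the coefficient matrix
    set c : Fin m → Fin m → ℝ := fun p q => ∑ j, L j p * M j q with hc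
    -- main computation
    have main : φ (∑ j, W (L j) (M j)) = 0 := by
      have step1 : φ (∑ j, W (L j) (M j))
          = ∑ j, ∑ p, ∑ q, w ((L j p * M j q) • e p) (e q) := by
        rw [map_sum]
        refine Finset.sum_congr rfl fun j _ => ?_
        show w (L j) (M j) = _
        conv_lhs => rw [hbasis (L j)]
        rw [wsum₁]
        refine Finset.sum_congr rfl fun p _ => ?_
        conv_lhs => rw [hbasis (M j)]
        rw [wsum₂]
        refine Finset.sum_congr rfl fun q _ => ?_
        rw [← wscal (M j q), smul_smul, mul_comm]
      rw [step1, Finset.sum_comm]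
      have step2 : ∀ p, ∑ j, ∑ q, w ((L j p * M j q) • e p) (e q)
          = ∑ q, w ((c p q) • e p) (e q) := by
        intro p
        rw [Finset.sum_comm]
        refine Finset.sum_congr rfl fun q _ => ?_
        have := map_sum (AddMonoidHom.mk' (fun r : ℝ => w (r • e p) (e q))
          (fun x y => by show w ((x + y) • e p) _ = _; rw [add_smul, wadd₁]))
          (fun j => L j p * M j q) Finset.univ
        exact this.symm
      rw [Finset.sum_congr rfl fun p _ => step2 p]
      -- now kill the symmetric sum
      rw [← Finset.sum_product']
      refine Finset.sum_involution (fun x _ => Prod.swap x) ?_ ?_ ?_ ?_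
      · intro ⟨p, q⟩ _
        show w (c p q • e p) (e q) + w (c q p • e q) (e p) = 0
        have hcs : c q p = c p q := (hsymm p q).symm
        rw [hcs, wskew (c p q • e q) (e p), ← wscal, add_neg_cancel]
      · intro ⟨p, q⟩ _ hf hswap
        apply hf
        have hpq : q = p := congrArg Prod.fst hswap
        subst hpq
        exact wdiag _ _
      · intro x _; exact Finset.mem_univ _
      · intro x _; rfl
    exact (QuotientAddGroup.eq_zero_iff _).1 main
  -- Step 2: elements of H have the desired representation
  have rep : ∀ x ∈ H, ∃ (N : ℕ) (γ : Fin N → ℝ) (ν : Fin N → Fin m → ℝ),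
      x = ∑ k, W (γ k • ν k) (ν k) := by
    intro x hx
    induction hx using AddSubgroup.closure_induction with
    | mem g hg =>
      obtain ⟨cg, vg, rfl⟩ := hg
      exact ⟨1, fun _ => cg, fun _ => vg, by simp⟩
    | zero =>
      exact ⟨0, fun k => 0, fun _ => 0, by simp⟩
    | add a b _ _ ha hb =>
      obtain ⟨N₁, γ₁, ν₁, rfl⟩ := ha
      obtain ⟨N₂, γ₂, ν₂, rfl⟩ := hb
      refine ⟨N₁ + N₂, Fin.append γ₁ γ₂, Fin.append ν₁ ν₂, ?_⟩
      rw [Fin.sum_univ_add]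
      simp [Fin.append_left, Fin.append_right]
    | neg a _ ha =>
      obtain ⟨N₁, γ₁, ν₁, rfl⟩ := ha
      have hch : ∀ k : Fin N₁, ∃ (c' : ℝ) (v' : Fin m → ℝ),
          -W (γ₁ k • ν₁ k) (ν₁ k) = W (c' • v') v' := by
        intro k
        have := negS (W (γ₁ k • ν₁ k) (ν₁ k)) ⟨γ₁ k, ν₁ k, rfl⟩
        exact this
      choose γ' ν' hγν using hch
      refine ⟨N₁, γ', ν', ?_⟩
      rw [← Finset.sum_neg_distrib]
      exact Finset.sum_congr rfl fun k _ => hγν k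
  exact rep _ hmem
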